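/- Let T > 0, ρ ∈ (0,1), q ∈ (1/ρ, ∞), and let g ∈ L^q(0,T;ℝ) with g(t) ≥ 0 for almost every t ∈ [0,T]. Set β := (ρq − 1)/(q − 1) ∈ (0,1) and q* := q/(q − 1), and define F₁(t) := J^ρ g(t) and F_{k+1}(t) := J^ρ (g · F_k)(t) for k ≥ 1. Then for every n ≥ 1 and every t ∈ [0,T], F_n(t) ≤ (‖g‖_{L^q(0,T)} / Γ(ρ))ⁿ · (Γ(β)ⁿ / (n β Γ(nβ)))^{1/q*} · t^{n(ρ − 1/q)}. -/

import Mathlib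

open MeasureTheory Real Set

/-- The Riemann–Liouville fractional integral of order `α`:
`J^α g (t) = (1/Γ(α)) ∫₀ᵗ (t-s)^(α-1) g(s) ds`. -/
noncomputable def rlInt {E : Type*} [NormedAddCommGroup E] [NormedSpace ℝ E]
    (α : ℝ) (g : ℝ → E) (t : ℝ) : E :=
  (Real.Gamma α)⁻¹ • ∫ s in (0:ℝ)..t, (t - s) ^ (α - 1) • g s

/-- The iterated Riemann–Liouville integrals: `iterJ ρ g 1 = J^ρ g` and
`iterJ ρ g (k+1) = J^ρ (g · iterJ ρ g k)`. -/
noncomputable def iterJ (ρ : ℝ) (g : ℝ → ℝ) : ℕ → ℝ → ℝ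
  | 0 => fun _ => 1
  | k + 1 => fun t => rlInt ρ (fun s => g s * iterJ ρ g k s) t

lemma rbeta_int_left {a : ℝ} (ha : 0 < a) (b : ℝ) :
    IntervalIntegrable (fun x : ℝ => x ^ (a-1) * (1-x) ^ (b-1)) volume 0 (1/2) := by
  apply IntervalIntegrable.mul_continuousOn
  · exact intervalIntegral.intervalIntegrable_rpow' (by linarith)
  · apply ContinuousOn.rpow_const (continuous_const.sub continuous_id).continuousOn
    intro x hx
    rw [uIcc_of_le (by norm_num : (0:ℝ) ≤ 1/2)] at hx
    exact Or.inl (by intro h; simp only [Pi.sub_apply, id_eq] at h; nlinarith [hx.2])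

lemma rbeta_int {a b : ℝ} (ha : 0 < a) (hb : 0 < b) :
    IntervalIntegrable (fun x : ℝ => x ^ (a-1) * (1-x) ^ (b-1)) volume 0 1 := by
  refine (rbeta_int_left ha b).trans ?_
  rw [IntervalIntegrable.iff_comp_neg]
  convert ((rbeta_int_left hb a).comp_add_right 1).symm using 1
  · ext1 x
    have h1 : (1:ℝ) - -x = x + 1 := by ring
    have h2 : -x = 1 - (x+1) := by ring
    rw [h1, h2, mul_comm]
  · norm_num
  · norm_num

lemma rbeta_val {a b : ℝ} (ha : 0 < a) (hb : 0 < b) :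
    ∫ x in (0:ℝ)..1, x ^ (a-1) * (1-x) ^ (b-1) = Gamma a * Gamma b / Gamma (a+b) := by
  have hcb : Complex.betaIntegral a b
      = ((∫ x in (0:ℝ)..1, x ^ (a-1) * (1-x) ^ (b-1) : ℝ) : ℂ) := by
    rw [Complex.betaIntegral, ← intervalIntegral.integral_ofReal]
    refine intervalIntegral.integral_congr fun x hx => ?_
    rw [uIcc_of_le zero_le_one] at hx
    rw [Complex.ofReal_mul, Complex.ofReal_cpow hx.1, Complex.ofReal_cpow (by linarith [hx.2])]
    push_cast
    ring
  have hG : Complex.Gamma a * Complex.Gamma b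
      = Complex.Gamma (a+b) * Complex.betaIntegral a b :=
    Complex.Gamma_mul_Gamma_eq_betaIntegral (by simpa using ha) (by simpa using hb)
  rw [hcb, ← Complex.ofReal_add, Complex.Gamma_ofReal, Complex.Gamma_ofReal,
    Complex.Gamma_ofReal, ← Complex.ofReal_mul, ← Complex.ofReal_mul] at hG
  have h := Complex.ofReal_inj.mp hG
  have hne : Gamma (a+b) ≠ 0 := (Real.Gamma_pos_of_pos (by linarith)).ne'
  field_simp
  linarith [h]

lemma rbeta_key_eq {a b t : ℝ} (ht : 0 < t) {s : ℝ} (hs : s ∈ Set.Ioc 0 t) :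
    s ^ (a-1) * (t-s) ^ (b-1)
      = t ^ (a-1) * t ^ (b-1) * ((s/t) ^ (a-1) * (1-s/t) ^ (b-1)) := by
  have h1 : s = t * (s/t) := by field_simp
  have h2 : t - s = t * (1 - s/t) := by field_simp
  rw [h2, Real.mul_rpow ht.le (by rw [sub_nonneg, div_le_one ht]; exact hs.2)]
  nth_rewrite 1 [h1]
  rw [Real.mul_rpow ht.le (div_nonneg hs.1.le ht.le)]
  ring

lemma rbeta_scaled_int {a b t : ℝ} (ha : 0 < a) (hb : 0 < b) (ht : 0 < t) :
    IntervalIntegrable (fun s : ℝ => s ^ (a-1) * (t-s) ^ (b-1)) volume 0 t := by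
  have h := ((rbeta_int ha hb).comp_mul_right (c := t⁻¹))
  have h2 : IntervalIntegrable (fun x : ℝ => (x/t)^(a-1)*(1-x/t)^(b-1)) volume 0 t := by
    simpa [div_eq_mul_inv, ht.ne'] using h
  refine (h2.const_mul (t^(a-1) * t^(b-1))).congr ?_
  intro s hs
  rw [uIoc_of_le ht.le] at hs
  exact (rbeta_key_eq ht hs).symm

lemma rbeta_scaled_val {a b t : ℝ} (ha : 0 < a) (hb : 0 < b) (ht : 0 < t) :
    ∫ s in (0:ℝ)..t, s ^ (a-1) * (t-s) ^ (b-1)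
      = Gamma a * Gamma b / Gamma (a+b) * t ^ (a+b-1) := by
  have hcongr : ∫ s in (0:ℝ)..t, s ^ (a-1) * (t-s) ^ (b-1)
      = ∫ s in (0:ℝ)..t, t ^ (a-1) * t ^ (b-1) * ((s/t) ^ (a-1) * (1-s/t) ^ (b-1)) := by
    rw [intervalIntegral.integral_of_le ht.le, intervalIntegral.integral_of_le ht.le]
    exact setIntegral_congr_fun measurableSet_Ioc fun s hs => rbeta_key_eq ht hs
  rw [hcongr, intervalIntegral.integral_const_mul]
  have hsub := intervalIntegral.integral_comp_div
    (f := fun x : ℝ => x ^ (a-1) * (1-x) ^ (b-1)) (a := 0) (b := t) (c := t) ht.ne'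
  rw [zero_div, div_self ht.ne'] at hsub
  rw [hsub, rbeta_val ha hb, smul_eq_mul]
  rw [show a+b-1 = (a-1) + ((b-1) + 1) by ring, Real.rpow_add ht, Real.rpow_add ht,
    Real.rpow_one]
  ring

/-- Explicit bound for the iterated Riemann–Liouville integrals: with
`β = (ρq - 1)/(q - 1)` and `q* = q/(q - 1)`, for every `n ≥ 1` and `t ∈ [0,T]`,
`Fₙ(t) ≤ (‖g‖_{L^q}/Γ(ρ))ⁿ (Γ(β)ⁿ/(nβΓ(nβ)))^{1/q*} t^{n(ρ - 1/q)}`. -/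
theorem iterated_rlInt_bound
    (T : ℝ) (hT : 0 < T) (ρ : ℝ) (hρ : ρ ∈ Ioo (0:ℝ) 1)
    (q : ℝ) (hq : 1 / ρ < q)
    (g : ℝ → ℝ) (hg : MemLp g (ENNReal.ofReal q) (volume.restrict (Icc (0:ℝ) T)))
    (hg0 : ∀ᵐ t ∂(volume.restrict (Icc (0:ℝ) T)), 0 ≤ g t)
    (β qs : ℝ) (hβ : β = (ρ * q - 1) / (q - 1)) (hqs : qs = q / (q - 1)) :
    ∀ n : ℕ, 1 ≤ n → ∀ t ∈ Icc (0:ℝ) T,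
      iterJ ρ g n t ≤
        ((eLpNorm g (ENNReal.ofReal q) (volume.restrict (Icc (0:ℝ) T))).toReal /
            Real.Gamma ρ) ^ n *
          (Real.Gamma β ^ n / ((n : ℝ) * β * Real.Gamma ((n : ℝ) * β))) ^ (1 / qs) *
          t ^ ((n : ℝ) * (ρ - 1 / q)) := by
  obtain ⟨hρ0, hρ1⟩ := hρ
  set μ := volume.restrict (Icc (0:ℝ) T) with hμ
  set M := (eLpNorm g (ENNReal.ofReal q) μ).toReal with hM
  have hq1 : 1 < q := lt_trans (one_lt_one_div hρ0 hρ1) hq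
  have hq0 : 0 < q := by linarith
  have hρq : 1 < ρ * q := by
    rw [div_lt_iff₀ hρ0] at hq; linarith [hq]
  have hβ0 : 0 < β := by rw [hβ]; exact div_pos (by linarith) (by linarith)
  have hβ1 : β < 1 := by rw [hβ, div_lt_one (by linarith)]; nlinarith
  have hq1' : q - 1 ≠ 0 := sub_ne_zero.2 hq1.ne'
  have hqs0 : 0 < qs := by rw [hqs]; exact div_pos (by linarith) (by linarith)
  have hqs1 : 1 < qs := by rw [hqs, lt_div_iff₀ (by linarith)]; linarith
  have hconj : Real.HolderConjugate qs q := by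
    rw [Real.holderConjugate_iff]
    constructor
    · exact hqs1
    · rw [hqs]; field_simp [hq1']; ring
  have hβqs : (ρ - 1) * qs = β - 1 := by
    rw [hβ, hqs]; field_simp [hq1']; ring
  have hexp : β / qs = ρ - 1/q := by
    rw [hβ, hqs]; field_simp [hq1']
  have hM0 : 0 ≤ M := ENNReal.toReal_nonneg
  have hΓρ : 0 < Gamma ρ := Real.Gamma_pos_of_pos hρ0
  have hΓβ : 0 < Gamma β := Real.Gamma_pos_of_pos hβ0
  have hg0' : ∀ᵐ x ∂(volume : Measure ℝ), x ∈ Icc (0:ℝ) T → 0 ≤ g x :=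
    (ae_restrict_iff' measurableSet_Icc).1 hg0
  have hqne0 : (ENNReal.ofReal q) ≠ 0 := by
    simp [ENNReal.ofReal_eq_zero, not_le, hq0]
  have hqnetop : (ENNReal.ofReal q) ≠ ⊤ := ENNReal.ofReal_ne_top
  -- the key norm identity
  have hMeq : M = (∫ x, ‖g x‖ ^ q ∂μ) ^ q⁻¹ := by
    rw [hM, hg.eLpNorm_eq_integral_rpow_norm hqne0 hqnetop, ENNReal.toReal_ofReal hq0.le,
      ENNReal.toReal_ofReal]
    exact Real.rpow_nonneg
      (integral_nonneg fun x => Real.rpow_nonneg (norm_nonneg _) _) _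
  have key : ∀ n : ℕ, ∀ t ∈ Icc (0:ℝ) T, 0 ≤ iterJ ρ g n t ∧
      iterJ ρ g n t ≤ (M / Gamma ρ)^n * (Gamma β ^ n / Gamma ((n:ℝ)*β+1))^(1/qs)
        * t ^ ((n:ℝ)*β/qs) := by
    intro n
    induction n with
    | zero =>
      intro t ht
      norm_num [iterJ, Real.Gamma_one]
    | succ n ih =>
      intro t ht
      have hFint : iterJ ρ g (n+1) t
          = (Gamma ρ)⁻¹ * ∫ s in (0:ℝ)..t, (t-s)^(ρ-1) * (g s * iterJ ρ g n s) := by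
        simp [iterJ, rlInt, smul_eq_mul]
      rcases eq_or_lt_of_le ht.1 with h0 | h0
      · constructor
        · rw [hFint, ← h0]
          simp
        · rw [hFint, ← h0]
          simp only [intervalIntegral.integral_same, mul_zero]
          have hep : (0:ℝ) < ((n+1:ℕ):ℝ)*β/qs := by positivity
          rw [Real.zero_rpow hep.ne']
          simp
      · -- 0 < t
        set a : ℝ := (n:ℝ)*β with ha
        have ha0 : 0 ≤ a := by positivity
        have hΓa : 0 < Gamma (a+1) := Real.Gamma_pos_of_pos (by linarith)
        have hΓab : 0 < Gamma (a+1+β) := Real.Gamma_pos_of_pos (by linarith)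
        set Cn : ℝ := (M / Gamma ρ)^n * (Gamma β ^ n / Gamma (a+1))^(1/qs) with hCn
        have hCn0 : 0 ≤ Cn := by positivity
        set e : ℝ := a/qs with he
        have he0 : 0 ≤ e := by positivity
        set φ : ℝ → ℝ := fun s => (t-s)^(ρ-1) * s^e with hφ
        have hsub : Ioc (0:ℝ) t ⊆ Icc (0:ℝ) T := fun s hs => ⟨hs.1.le, hs.2.trans ht.2⟩
        set μ' : Measure ℝ := volume.restrict (Ioc (0:ℝ) t) with hμ'
        have hμ'le : μ' ≤ μ := by
          rw [hμ', hμ]; exact Measure.restrict_mono hsub le_rfl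
        have hg0'' : ∀ᵐ s ∂μ', 0 ≤ g s := by
          rw [hμ', ae_restrict_iff' measurableSet_Ioc]
          filter_upwards [hg0'] with s h1 h2 using h1 (hsub h2)
        have hφ0 : ∀ᵐ s ∂μ', 0 ≤ φ s := by
          rw [hμ', ae_restrict_iff' measurableSet_Ioc]
          refine Filter.Eventually.of_forall fun s hs => ?_
          exact mul_nonneg (Real.rpow_nonneg (by linarith [hs.2]) _)
            (Real.rpow_nonneg hs.1.le _)
        have hφm : AEStronglyMeasurable φ μ' := by
          apply Measurable.aestronglyMeasurable
          rw [hφ]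
          fun_prop
        have hφpow : ∀ s ∈ Ioc (0:ℝ) t, φ s ^ qs = (t-s)^(β-1) * s^a := by
          intro s hs
          have hts : (0:ℝ) ≤ t - s := by linarith [hs.2]
          rw [hφ]
          simp only []
          rw [Real.mul_rpow (Real.rpow_nonneg hts _) (Real.rpow_nonneg hs.1.le _),
            ← Real.rpow_mul hts, ← Real.rpow_mul hs.1.le, hβqs, he,
            div_mul_cancel₀ _ hqs0.ne']
        have hint1 : IntegrableOn (fun s => (t-s)^(β-1) * s^a) (Ioc (0:ℝ) t) volume := by
          have h := rbeta_scaled_int (a := a+1) (b := β) (by linarith) hβ0 h0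
          rw [intervalIntegrable_iff_integrableOn_Ioc_of_le h0.le] at h
          refine h.congr_fun (fun s _ => ?_) measurableSet_Ioc
          simp [show a+1-1 = a by ring, mul_comm]
        have hqsne0 : (ENNReal.ofReal qs) ≠ 0 := by
          simp [ENNReal.ofReal_eq_zero, not_le, hqs0]
        have hqsnetop : (ENNReal.ofReal qs) ≠ ⊤ := ENNReal.ofReal_ne_top
        have hφnorm : Integrable (fun s => ‖φ s‖ ^ (ENNReal.ofReal qs).toReal) μ' := by
          rw [ENNReal.toReal_ofReal hqs0.le]
          refine hint1.congr ?_
          filter_upwards [ae_restrict_mem measurableSet_Ioc, hφ0] with s hs hφs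
          rw [Real.norm_eq_abs, abs_of_nonneg hφs, hφpow s hs]
        have hφmem : MemLp φ (ENNReal.ofReal qs) μ' := by
          have hiff := memLp_norm_rpow_iff (q := ENNReal.ofReal qs)
            (p := ENNReal.ofReal qs) hφm hqsne0 hqsnetop
          rw [ENNReal.div_self hqsne0 hqsnetop] at hiff
          exact hiff.1 (memLp_one_iff_integrable.2 hφnorm)
        have hgmem' : MemLp g (ENNReal.ofReal q) μ' := hg.mono_measure hμ'le
        have hprod : Integrable (fun s => φ s * g s) μ' := by
          have h1 : (1:ENNReal)/1 = 1/(ENNReal.ofReal qs) + 1/(ENNReal.ofReal q) := by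
            rw [one_div, one_div, one_div, ← ENNReal.ofReal_inv_of_pos hqs0,
              ← ENNReal.ofReal_inv_of_pos hq0,
              ← ENNReal.ofReal_add (by positivity) (by positivity)]
            rw [hconj.inv_add_inv_eq_one, ENNReal.ofReal_one, inv_one]
          have := hgmem'.smul hφmem (r := 1)
            (hpqr := ⟨by simpa only [one_div, inv_one, div_one] using h1.symm⟩)
          rw [memLp_one_iff_integrable] at this
          exact this
        have hnn : ∀ᵐ s ∂μ', 0 ≤ (t-s)^(ρ-1) * (g s * iterJ ρ g n s) := by
          filter_upwards [hg0'', ae_restrict_mem measurableSet_Ioc] with s h1 h2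
          have hF0 := (ih s (hsub h2)).1
          have hts : (0:ℝ) ≤ t - s := by linarith [h2.2]
          exact mul_nonneg (Real.rpow_nonneg hts _) (mul_nonneg h1 hF0)
        have step1 : ∫ s in Ioc (0:ℝ) t, (t-s)^(ρ-1) * (g s * iterJ ρ g n s)
            ≤ ∫ s in Ioc (0:ℝ) t, Cn * (φ s * g s) := by
          refine integral_mono_of_nonneg hnn (hprod.const_mul Cn) ?_
          filter_upwards [hg0'', ae_restrict_mem measurableSet_Ioc] with s h1 h2
          have hFb := (ih s (hsub h2)).2
          have hts : (0:ℝ) ≤ t - s := by linarith [h2.2]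
          have h3 : g s * iterJ ρ g n s ≤ g s * (Cn * s^e) := by
            apply mul_le_mul_of_nonneg_left _ h1
            calc iterJ ρ g n s ≤ Cn * s^(a/qs) := hFb
            _ = Cn * s^e := by rw [he]
          calc (t-s)^(ρ-1) * (g s * iterJ ρ g n s)
              ≤ (t-s)^(ρ-1) * (g s * (Cn * s^e)) :=
                mul_le_mul_of_nonneg_left h3 (Real.rpow_nonneg hts _)
            _ = Cn * (φ s * g s) := by rw [hφ]; ring
        have step2 : ∫ s in Ioc (0:ℝ) t, φ s * g s
            ≤ (∫ s in Ioc (0:ℝ) t, φ s ^ qs) ^ (1/qs)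
              * (∫ s in Ioc (0:ℝ) t, g s ^ q) ^ (1/q) := by
          have := integral_mul_le_Lp_mul_Lq_of_nonneg hconj hφ0 hg0'' hφmem hgmem'
          rw [hμ'] at this
          exact this
        have hφint : ∫ s in Ioc (0:ℝ) t, φ s ^ qs
            = Gamma (a+1) * Gamma β / Gamma (a+1+β) * t^(a+β) := by
          have h1 : ∫ s in Ioc (0:ℝ) t, φ s ^ qs = ∫ s in Ioc (0:ℝ) t, (t-s)^(β-1) * s^a :=
            setIntegral_congr_fun measurableSet_Ioc (fun s hs => hφpow s hs)
          rw [h1, ← intervalIntegral.integral_of_le h0.le]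
          have hval := rbeta_scaled_val (a := a+1) (b := β) (by linarith) hβ0 h0
          rw [show a+1+β-1 = a+β by ring] at hval
          rw [← hval]
          apply intervalIntegral.integral_congr
          intro s hs
          simp [show a+1-1 = a by ring, mul_comm]
        have hgq : (∫ s in Ioc (0:ℝ) t, g s ^ q) ^ (1/q) ≤ M := by
          have h1 : ∫ s in Ioc (0:ℝ) t, g s ^ q = ∫ s in Ioc (0:ℝ) t, ‖g s‖^q := by
            refine integral_congr_ae ?_
            filter_upwards [hg0''] with s hsg
            rw [Real.norm_eq_abs, abs_of_nonneg hsg]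
          have h2 : ∫ s in Ioc (0:ℝ) t, ‖g s‖^q ≤ ∫ x, ‖g x‖^q ∂μ := by
            refine integral_mono_measure hμ'le ?_ ?_
            · exact Filter.Eventually.of_forall fun s => Real.rpow_nonneg (norm_nonneg _) _
            · have h3 := hg.integrable_norm_rpow hqne0 hqnetop
              rwa [ENNReal.toReal_ofReal hq0.le] at h3
          rw [hMeq, one_div]
          apply Real.rpow_le_rpow _ _ (by positivity)
          · refine integral_nonneg_of_ae ?_
            filter_upwards [hg0''] with s hs using Real.rpow_nonneg hs _
          · rw [h1]; exact h2
        -- combine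
        have hI0 : 0 ≤ ∫ s in Ioc (0:ℝ) t, (t-s)^(ρ-1) * (g s * iterJ ρ g n s) :=
          integral_nonneg_of_ae hnn
        rw [hFint, intervalIntegral.integral_of_le h0.le]
        constructor
        · positivity
        · have hX0 : (0:ℝ) ≤ (∫ s in Ioc (0:ℝ) t, φ s ^ qs) ^ (1/qs) := by
            rw [hφint]; positivity
          have chain : ∫ s in Ioc (0:ℝ) t, (t-s)^(ρ-1) * (g s * iterJ ρ g n s)
              ≤ Cn * ((Gamma (a+1) * Gamma β / Gamma (a+1+β) * t^(a+β))^(1/qs) * M) := by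
            refine step1.trans ?_
            rw [MeasureTheory.integral_const_mul]
            refine mul_le_mul_of_nonneg_left ?_ hCn0
            refine step2.trans ?_
            rw [hφint] at hX0 ⊢
            exact mul_le_mul_of_nonneg_left hgq hX0
          have hfin := mul_le_mul_of_nonneg_left chain (inv_nonneg.2 hΓρ.le)
          refine hfin.trans_eq ?_
          have A1 : (Gamma (a+1) * Gamma β / Gamma (a+1+β) * t^(a+β))^(1/qs)
              = (Gamma (a+1) * Gamma β / Gamma (a+1+β))^(1/qs) * t^((a+β)/qs) := by
            rw [Real.mul_rpow (by positivity) (Real.rpow_nonneg h0.le _),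
              ← Real.rpow_mul h0.le, mul_one_div]
          have A2 : (Gamma β ^ (n+1) / Gamma (a+1+β))^(1/qs)
              = (Gamma β ^ n / Gamma (a+1))^(1/qs)
                * (Gamma (a+1) * Gamma β / Gamma (a+1+β))^(1/qs) := by
            rw [← Real.mul_rpow (by positivity) (by positivity)]
            congr 1
            field_simp
            ring
          rw [A1]
          push_cast
          rw [show ((n:ℝ)+1)*β + 1 = a+1+β by rw [ha]; ring,
            show ((n:ℝ)+1)*β/qs = (a+β)/qs by rw [ha]; ring, A2, hCn]
          ring
  intro n hn t ht
  have h := (key n t ht).2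
  have hn0 : (0:ℝ) < (n:ℝ) := by exact_mod_cast hn
  have hnβ : (0:ℝ) < (n:ℝ)*β := mul_pos hn0 hβ0
  rw [Real.Gamma_add_one hnβ.ne'] at h
  rw [mul_div_assoc, hexp] at h
  exact h
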